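/- Let G' with list assignment L, and L-colorings α and β, be obtained from a graph G by the NP-hardness construction (with any choice of (a,b)-forbidding paths of length six). If there exists an L-recoloring sequence for G' from α to β (of any length), then G is 3-colorable. -/

import Mathlib

/-- An `L`-coloring of `G`: every vertex gets a color from its list, and adjacent
vertices get different colors. -/
def IsLColoring {V : Type*} (G : SimpleGraph V) (L : V → Finset ℕ) (γ : V → ℕ) : Prop :=
  (∀ v, γ v ∈ L v) ∧ ∀ u v, G.Adj u v → γ u ≠ γ v

/-- An `L`-recoloring sequence `seq 0, …, seq ℓ` from `α` to `β`: all are `L`-colorings,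
and consecutive colorings differ on at most one vertex. -/
def IsLRecolSeq {V : Type*} (G : SimpleGraph V) (L : V → Finset ℕ) (seq : ℕ → V → ℕ)
    (ℓ : ℕ) (α β : V → ℕ) : Prop :=
  seq 0 = α ∧ seq ℓ = β ∧ (∀ i ≤ ℓ, IsLColoring G L (seq i)) ∧
  ∀ i < ℓ, ∀ u w, seq i u ≠ seq (i+1) u → seq i w ≠ seq (i+1) w → u = w

/-- The path `w_0, w_1, …, w_6` of length six. -/
def PathG7 : SimpleGraph (Fin 7) where
  Adj i j := i.val + 1 = j.val ∨ j.val + 1 = i.val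
  symm := ⟨fun _ _ h => h.symm⟩
  loopless := ⟨fun i h => by rcases h with h | h <;> omega⟩

/-- An `(a,b)`-forbidding path of length six, with end vertices `w_0 = u` and `w_6 = v`:
all lists are contained in `{1,2,3,4}`; a pair `(x,y) ∈ L(u) × L(v)` is realized by some
`L`-coloring iff `x ≠ a` or `y ≠ b` (such pairs are admissible); and from any `L`-coloring
`γ` and admissible pair `(x,y)` with `x = γ(u)` or `y = γ(v)`, one can `L`-recolor to a
coloring `δ` with `δ(u) = x`, `δ(v) = y`, recoloring every internal vertex at most once
and not recoloring `u` and `v` until the last step. -/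
def IsForbiddingPath (L : Fin 7 → Finset ℕ) (a b : ℕ) : Prop :=
  (∀ w, L w ⊆ ({1, 2, 3, 4} : Finset ℕ)) ∧
  (∀ x ∈ L 0, ∀ y ∈ L 6,
    ((x ≠ a ∨ y ≠ b) ↔ ∃ γ, IsLColoring PathG7 L γ ∧ γ 0 = x ∧ γ 6 = y)) ∧
  (∀ γ, IsLColoring PathG7 L γ → ∀ x ∈ L 0, ∀ y ∈ L 6, (x ≠ a ∨ y ≠ b) →
    (x = γ 0 ∨ y = γ 6) →
    ∃ ℓ seq δ, IsLRecolSeq PathG7 L seq ℓ γ δ ∧ δ 0 = x ∧ δ 6 = y ∧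
      (∀ w : Fin 7, w ≠ 0 → w ≠ 6 →
        ((Finset.range ℓ).filter (fun i => seq i w ≠ seq (i+1) w)).card ≤ 1) ∧
      (∀ i < ℓ, seq i 0 = γ 0 ∧ seq i 6 = γ 6))

/-- Vertices of the graph `G'` of the NP-hardness construction, built from a graph on
`Fin N` (edges of `G` are oriented as pairs `(u,v)` with `u < v`): `orig w` are the
original vertices; `x u v`, `y u v`, `z u v` are the gadget vertices `x_uv`, `y_uv`,
`z_uv`; `p j u v s` is the `s`-th internal vertex (`s ∈ {0,…,4}`) of the `j`-th
forbidding path (`j ∈ {0,…,7}`) of the gadget of edge `uv`; `A`, `B`, `C`, `D` are the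
four special vertices `a`, `b`, `c`, `d`. -/
inductive NPV (N : ℕ) : Type
  | orig : Fin N → NPV N
  | x : Fin N → Fin N → NPV N
  | y : Fin N → Fin N → NPV N
  | z : Fin N → Fin N → NPV N
  | p : Fin 8 → Fin N → Fin N → Fin 5 → NPV N
  | A : NPV N
  | B : NPV N
  | C : NPV N
  | D : NPV N
deriving DecidableEq

/-- Oriented edges of `G`: `u < v` and `uv ∈ E(G)`. -/
def OEdge {N : ℕ} (G : SimpleGraph (Fin N)) (u v : Fin N) : Prop := G.Adj u v ∧ u < v

/-- Start vertex of the `j`-th forbidding path of the gadget of edge `uv`. -/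
def fpStart {N : ℕ} (u v : Fin N) : Fin 8 → NPV N :=
  ![.orig u, .orig u, .orig u, .orig v, .orig v, .orig v, .x u v, .y u v]

/-- End vertex of the `j`-th forbidding path of the gadget of edge `uv`. -/
def fpEnd {N : ℕ} (u v : Fin N) : Fin 8 → NPV N :=
  ![.x u v, .x u v, .y u v, .x u v, .x u v, .y u v, .z u v, .z u v]

/-- The forbidden pair `(a,b)` of the `j`-th forbidding path of a gadget: a
`(1,2)`-, `(3,1)`-forbidding path from `u` to `x_uv`, a `(2,3)`-forbidding path from `u`
to `y_uv`, a `(2,1)`-, `(3,2)`-forbidding path from `v` to `x_uv`, a `(1,3)`-forbidding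
path from `v` to `y_uv`, a `(4,1)`-forbidding path from `x_uv` to `z_uv`, and a
`(4,2)`-forbidding path from `y_uv` to `z_uv`. -/
def fpPair : Fin 8 → ℕ × ℕ :=
  ![(1, 2), (3, 1), (2, 3), (2, 1), (3, 2), (1, 3), (4, 1), (4, 2)]

/-- Base (asymmetric) adjacency relation of `G'`: direct edges `u x_uv`, `u y_uv`;
the edges of the forbidding paths; all edges among `{a,b,c,d}` except `cd`;
and all edges from `Z` to `c`. -/
def NPRel {N : ℕ} (G : SimpleGraph (Fin N)) : NPV N → NPV N → Prop := fun w w' =>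
  (∃ u v, OEdge G u v ∧ w = .orig u ∧ (w' = .x u v ∨ w' = .y u v)) ∨
  (∃ u v j, OEdge G u v ∧ w = fpStart u v j ∧ w' = .p j u v 0) ∨
  (∃ u v j, ∃ s s' : Fin 5, OEdge G u v ∧ s'.val = s.val + 1 ∧
    w = .p j u v s ∧ w' = .p j u v s') ∨
  (∃ u v j, OEdge G u v ∧ w = .p j u v 4 ∧ w' = fpEnd u v j) ∨
  (w = .A ∧ (w' = .B ∨ w' = .C ∨ w' = .D)) ∨
  (w = .B ∧ (w' = .C ∨ w' = .D)) ∨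
  (∃ u v, OEdge G u v ∧ w = .z u v ∧ w' = .C)

/-- The graph `G'` of the NP-hardness construction. -/
def NPGraph {N : ℕ} (G : SimpleGraph (Fin N)) : SimpleGraph (NPV N) where
  Adj w w' := w ≠ w' ∧ (NPRel G w w' ∨ NPRel G w' w)
  symm := ⟨fun w w' h => ⟨h.1.symm, h.2.symm⟩⟩
  loopless := ⟨fun w h => h.1 rfl⟩

/-- The list assignment of `G'`, given the (arbitrary) lists `Lp` on the internal
vertices of the forbidding paths: `L(u) = {1,2,3}` for original vertices,
`L(x_uv) = {1,2,4}`, `L(y_uv) = {3,4}`, `L(z_uv) = {1,2,4}`, `L(a) = {1,2,3}`,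
`L(b) = {1,2}`, `L(c) = {3,4}`, `L(d) = {4}`. -/
def NPLists {N : ℕ} (Lp : Fin 8 → Fin N → Fin N → Fin 5 → Finset ℕ) :
    NPV N → Finset ℕ
  | .orig _ => {1, 2, 3}
  | .x _ _ => {1, 2, 4}
  | .y _ _ => {3, 4}
  | .z _ _ => {1, 2, 4}
  | .p j u v s => Lp j u v s
  | .A => {1, 2, 3}
  | .B => {1, 2}
  | .C => {3, 4}
  | .D => {4}

/-- The lists along the `j`-th forbidding path of the gadget of edge `uv`, viewed as a
standalone path of length six. -/
def gadgetPathLists {N : ℕ} (Lp : Fin 8 → Fin N → Fin N → Fin 5 → Finset ℕ)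
    (j : Fin 8) (u v : Fin N) : Fin 7 → Finset ℕ :=
  ![NPLists Lp (fpStart u v j), Lp j u v 0, Lp j u v 1, Lp j u v 2, Lp j u v 3,
    Lp j u v 4, NPLists Lp (fpEnd u v j)]

/-- The internal lists `Lp` are a valid choice for the construction: each gadget path is
an `(a,b)`-forbidding path of length six for its prescribed pair `(a,b)`. -/
def NPGoodLists {N : ℕ} (G : SimpleGraph (Fin N))
    (Lp : Fin 8 → Fin N → Fin N → Fin 5 → Finset ℕ) : Prop :=
  ∀ u v, OEdge G u v → ∀ j : Fin 8,
    IsForbiddingPath (gadgetPathLists Lp j u v) (fpPair j).1 (fpPair j).2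

section Stmt16Helpers
variable {N : ℕ} {G : SimpleGraph (Fin N)}

def pathEmb (j : Fin 8) (u v : Fin N) : Fin 7 → NPV N :=
  ![fpStart u v j, .p j u v 0, .p j u v 1, .p j u v 2, .p j u v 3, .p j u v 4,
    fpEnd u v j]

lemma lists_pathEmb (Lp : Fin 8 → Fin N → Fin N → Fin 5 → Finset ℕ) (j : Fin 8)
    (u v : Fin N) (i : Fin 7) :
    NPLists Lp (pathEmb j u v i) = gadgetPathLists Lp j u v i := by
  fin_cases i <;> rfl

lemma fpStart_ne_p (u v : Fin N) (j j' : Fin 8) (u' v' : Fin N) (s : Fin 5) :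
    fpStart u v j ≠ NPV.p j' u' v' s := by
  fin_cases j <;> exact fun h => nomatch h

lemma fpEnd_ne_p (u v : Fin N) (j j' : Fin 8) (u' v' : Fin N) (s : Fin 5) :
    fpEnd u v j ≠ NPV.p j' u' v' s := by
  fin_cases j <;> exact fun h => nomatch h
variable {u v : Fin N}

lemma adj01 (h : OEdge G u v) (j : Fin 8) :
    (NPGraph G).Adj (fpStart u v j) (.p j u v 0) :=
  ⟨fpStart_ne_p u v j j u v 0,
    Or.inl <| Or.inr <| Or.inl ⟨u, v, j, h, rfl, rfl⟩⟩

lemma adjpp (h : OEdge G u v) (j : Fin 8) (s s' : Fin 5) (hs : s'.val = s.val + 1) :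
    (NPGraph G).Adj (.p j u v s) (.p j u v s') :=
  ⟨by simp; omega,
    Or.inl <| Or.inr <| Or.inr <| Or.inl ⟨u, v, j, s, s', h, hs, rfl, rfl⟩⟩

lemma adj56 (h : OEdge G u v) (j : Fin 8) :
    (NPGraph G).Adj (.p j u v 4) (fpEnd u v j) :=
  ⟨(fpEnd_ne_p u v j j u v 4).symm,
    Or.inl <| Or.inr <| Or.inr <| Or.inr <| Or.inl ⟨u, v, j, h, rfl, rfl⟩⟩

lemma adj_AB : (NPGraph G).Adj .A .B :=
  ⟨by simp, Or.inl <| Or.inr <| Or.inr <| Or.inr <| Or.inr <| Or.inl ⟨rfl, Or.inl rfl⟩⟩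

lemma adj_AC : (NPGraph G).Adj .A .C :=
  ⟨by simp, Or.inl <| Or.inr <| Or.inr <| Or.inr <| Or.inr <| Or.inl
    ⟨rfl, Or.inr (Or.inl rfl)⟩⟩

lemma adj_zC (h : OEdge G u v) : (NPGraph G).Adj (.z u v) .C :=
  ⟨by simp, Or.inl <| Or.inr <| Or.inr <| Or.inr <| Or.inr <| Or.inr <| Or.inr
    ⟨u, v, h, rfl, rfl⟩⟩

lemma adj_orig_x (h : OEdge G u v) : (NPGraph G).Adj (.orig u) (.x u v) :=
  ⟨by simp, Or.inl <| Or.inl ⟨u, v, h, rfl, Or.inl rfl⟩⟩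

lemma adj_orig_y (h : OEdge G u v) : (NPGraph G).Adj (.orig u) (.y u v) :=
  ⟨by simp, Or.inl <| Or.inl ⟨u, v, h, rfl, Or.inr rfl⟩⟩

lemma adj_consec (h : OEdge G u v) (j : Fin 8) (k : ℕ) (hk : k < 6) :
    (NPGraph G).Adj (pathEmb j u v ⟨k, by omega⟩) (pathEmb j u v ⟨k + 1, by omega⟩) := by
  interval_cases k
  · exact adj01 h j
  · exact adjpp h j 0 1 rfl
  · exact adjpp h j 1 2 rfl
  · exact adjpp h j 2 3 rfl
  · exact adjpp h j 3 4 rfl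
  · exact adj56 h j

lemma adj_pathEmb (h : OEdge G u v) (j : Fin 8) {i i' : Fin 7}
    (ha : PathG7.Adj i i') :
    (NPGraph G).Adj (pathEmb j u v i) (pathEmb j u v i') := by
  have ha' : i.val + 1 = i'.val ∨ i'.val + 1 = i.val := ha
  obtain ⟨k, hk⟩ := i
  obtain ⟨k', hk'⟩ := i'
  simp only [] at ha'
  rcases ha' with h1 | h1
  · cases h1
    exact adj_consec h j k (by omega)
  · cases h1
    exact (adj_consec h j k' (by omega)).symm

lemma restrict_lcol {Lp : Fin 8 → Fin N → Fin N → Fin 5 → Finset ℕ}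
    {γ : NPV N → ℕ} (hγ : IsLColoring (NPGraph G) (NPLists Lp) γ)
    (h : OEdge G u v) (j : Fin 8) :
    IsLColoring PathG7 (gadgetPathLists Lp j u v) (γ ∘ pathEmb j u v) :=
  ⟨fun i => lists_pathEmb Lp j u v i ▸ hγ.1 (pathEmb j u v i),
   fun i i' ha => hγ.2 _ _ (adj_pathEmb h j ha)⟩

lemma forbid {Lp : Fin 8 → Fin N → Fin N → Fin 5 → Finset ℕ}
    (hLp : NPGoodLists G Lp) {γ : NPV N → ℕ}
    (hγ : IsLColoring (NPGraph G) (NPLists Lp) γ) (h : OEdge G u v) (j : Fin 8) :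
    γ (fpStart u v j) ≠ (fpPair j).1 ∨ γ (fpEnd u v j) ≠ (fpPair j).2 := by
  obtain ⟨-, hiff, -⟩ := hLp u v h j
  exact (hiff (γ (fpStart u v j)) (hγ.1 (fpStart u v j))
    (γ (fpEnd u v j)) (hγ.1 (fpEnd u v j))).mpr
    ⟨γ ∘ pathEmb j u v, restrict_lcol hγ h j, rfl, rfl⟩

end Stmt16Helpers

/-- Let `G'` with lists `L` and colorings `α`, `β` be obtained by the
NP-hardness construction from a graph `G` (with `α` as specified, extended in some fixed
way to the internal vertices of the forbidding paths, and `β` agreeing with `α`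
everywhere except `β(a) = 2`, `β(b) = 1`). If there is an `L`-recoloring sequence for
`G'` from `α` to `β` (of any length), then `G` is 3-colorable. -/
theorem stmt_16 (N : ℕ) (G : SimpleGraph (Fin N))
    (Lp : Fin 8 → Fin N → Fin N → Fin 5 → Finset ℕ) (hLp : NPGoodLists G Lp)
    (α : NPV N → ℕ) (hα : IsLColoring (NPGraph G) (NPLists Lp) α)
    (hαorig : ∀ w : Fin N, α (.orig w) = 1)
    (hαgadget : ∀ u v : Fin N, OEdge G u v →
      α (.x u v) = 4 ∧ α (.y u v) = 4 ∧ α (.z u v) = 4)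
    (hA : α .A = 1) (hB : α .B = 2) (hC : α .C = 3) (hD : α .D = 4)
    (ℓ : ℕ) (seq : ℕ → NPV N → ℕ)
    (hseq : IsLRecolSeq (NPGraph G) (NPLists Lp) seq ℓ α
      (Function.update (Function.update α .A 2) .B 1)) :
    G.Colorable 3 := by
  obtain ⟨h0, hend, hcol, hone⟩ := hseq
  -- Step 1: at some time, `a` has color 3.
  have hex : ∃ t ≤ ℓ, seq t NPV.A = 3 := by
    by_contra hc
    push_neg at hc
    have hAB : ∀ t ≤ ℓ, seq t NPV.A = 1 ∧ seq t NPV.B = 2 := by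
      intro t
      induction t with
      | zero => intro _; rw [h0]; exact ⟨hA, hB⟩
      | succ t ih =>
        intro ht
        obtain ⟨ihA, ihB⟩ := ih (by omega)
        have hc1 := hcol (t + 1) ht
        have hAne : seq (t + 1) NPV.A ≠ seq (t + 1) NPV.B := hc1.2 _ _ adj_AB
        have hmA : seq (t + 1) NPV.A ∈ ({1, 2, 3} : Finset ℕ) := hc1.1 NPV.A
        have hmB : seq (t + 1) NPV.B ∈ ({1, 2} : Finset ℕ) := hc1.1 NPV.B
        simp only [Finset.mem_insert, Finset.mem_singleton] at hmA hmB
        have h3 := hc (t + 1) ht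
        by_cases hchA : seq t NPV.A = seq (t + 1) NPV.A
        · rw [← hchA, ihA]
          rw [← hchA, ihA] at hAne
          refine ⟨rfl, ?_⟩
          omega
        · have hchB : seq t NPV.B = seq (t + 1) NPV.B := by
            by_contra hchB
            exact absurd (hone t (by omega) NPV.A NPV.B hchA hchB) (by simp)
          rw [← hchB, ihB]
          rw [← hchB, ihB] at hAne
          exact ⟨by omega, rfl⟩
    have h1 := (hAB ℓ le_rfl).1
    have h2 := congrFun hend NPV.A
    rw [Function.update_of_ne (by simp), Function.update_self] at h2
    omega
  obtain ⟨t, ht, hA3⟩ := hex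
  have hγ := hcol t ht
  set γ := seq t with hγdef
  -- Step 2: `c` has color 4, so every `z` avoids 4.
  have hC4 : γ NPV.C = 4 := by
    have h1 : γ NPV.A ≠ γ NPV.C := hγ.2 _ _ adj_AC
    have h2 : γ NPV.C ∈ ({3, 4} : Finset ℕ) := hγ.1 NPV.C
    simp only [Finset.mem_insert, Finset.mem_singleton] at h2
    omega
  -- Step 3: for every oriented edge, the origin colors differ.
  have key : ∀ u v : Fin N, OEdge G u v → γ (.orig u) ≠ γ (.orig v) := by
    intro u v huv
    have hzm : γ (.z u v) ∈ ({1, 2, 4} : Finset ℕ) := hγ.1 (NPV.z u v)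
    have hzC : γ (.z u v) ≠ γ NPV.C := hγ.2 _ _ (adj_zC huv)
    rw [hC4] at hzC
    have hxm : γ (.x u v) ∈ ({1, 2, 4} : Finset ℕ) := hγ.1 (NPV.x u v)
    have hym : γ (.y u v) ∈ ({3, 4} : Finset ℕ) := hγ.1 (NPV.y u v)
    have hum : γ (.orig u) ∈ ({1, 2, 3} : Finset ℕ) := hγ.1 (NPV.orig u)
    have hvm : γ (.orig v) ∈ ({1, 2, 3} : Finset ℕ) := hγ.1 (NPV.orig v)
    have hux : γ (.orig u) ≠ γ (.x u v) := hγ.2 _ _ (adj_orig_x huv)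
    have huy : γ (.orig u) ≠ γ (.y u v) := hγ.2 _ _ (adj_orig_y huv)
    have f0 : γ (.orig u) ≠ 1 ∨ γ (.x u v) ≠ 2 := forbid hLp hγ huv 0
    have f1 : γ (.orig u) ≠ 3 ∨ γ (.x u v) ≠ 1 := forbid hLp hγ huv 1
    have f2 : γ (.orig u) ≠ 2 ∨ γ (.y u v) ≠ 3 := forbid hLp hγ huv 2
    have f3 : γ (.orig v) ≠ 2 ∨ γ (.x u v) ≠ 1 := forbid hLp hγ huv 3
    have f4 : γ (.orig v) ≠ 3 ∨ γ (.x u v) ≠ 2 := forbid hLp hγ huv 4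
    have f5 : γ (.orig v) ≠ 1 ∨ γ (.y u v) ≠ 3 := forbid hLp hγ huv 5
    have f6 : γ (.x u v) ≠ 4 ∨ γ (.z u v) ≠ 1 := forbid hLp hγ huv 6
    have f7 : γ (.y u v) ≠ 4 ∨ γ (.z u v) ≠ 2 := forbid hLp hγ huv 7
    simp only [Finset.mem_insert, Finset.mem_singleton] at hzm hxm hym hum hvm
    rcases hzm with hz | hz | hz
    · -- z has color 1, so x avoids 4
      have hx4 : γ (.x u v) ≠ 4 := f6.resolve_right (not_not_intro hz)
      rcases hxm with hx | hx | hx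
      · -- x has color 1: u ≠ 3, v ≠ 2, u ≠ 1
        have hu3 : γ (.orig u) ≠ 3 := f1.resolve_right (not_not_intro hx)
        have hv2 : γ (.orig v) ≠ 2 := f3.resolve_right (not_not_intro hx)
        rw [hx] at hux
        omega
      · -- x has color 2: u ≠ 1, v ≠ 3, u ≠ 2
        have hu1 : γ (.orig u) ≠ 1 := f0.resolve_right (not_not_intro hx)
        have hv3 : γ (.orig v) ≠ 3 := f4.resolve_right (not_not_intro hx)
        rw [hx] at hux
        omega
      · exact absurd hx hx4
    · -- z has color 2, so y avoids 4, hence y = 3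
      have hy4 : γ (.y u v) ≠ 4 := f7.resolve_right (not_not_intro hz)
      have hy3 : γ (.y u v) = 3 := by omega
      have hu2 : γ (.orig u) ≠ 2 := f2.resolve_right (not_not_intro hy3)
      have hv1 : γ (.orig v) ≠ 1 := f5.resolve_right (not_not_intro hy3)
      rw [hy3] at huy
      omega
    · exact absurd hz hzC
  -- Step 4: build the 3-coloring.
  rw [SimpleGraph.colorable_iff_exists_bdd_nat_coloring]
  refine ⟨SimpleGraph.Coloring.mk (fun w => γ (.orig w) - 1) ?_, ?_⟩
  · intro w w' ha
    have h1 : γ (.orig w) ∈ ({1, 2, 3} : Finset ℕ) := hγ.1 (NPV.orig w)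
    have h2 : γ (.orig w') ∈ ({1, 2, 3} : Finset ℕ) := hγ.1 (NPV.orig w')
    simp only [Finset.mem_insert, Finset.mem_singleton] at h1 h2
    have hne : γ (.orig w) ≠ γ (.orig w') := by
      rcases lt_or_gt_of_ne (ha.ne) with h | h
      · exact key w w' ⟨ha, h⟩
      · exact (key w' w ⟨ha.symm, h⟩).symm
    show γ (.orig w) - 1 ≠ γ (.orig w') - 1
    omega
  · intro w
    have h1 : γ (.orig w) ∈ ({1, 2, 3} : Finset ℕ) := hγ.1 (NPV.orig w)
    simp only [Finset.mem_insert, Finset.mem_singleton] at h1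
    show γ (.orig w) - 1 < 3
    omega
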